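/- Let ‖·‖_A be the matrix atomic norm on ℂ^{M×N} with the atom set A_m = { a_X(f) a_Y(g)^T : f, g ∈ [0,1] }. For any X admitting a decomposition X = Σ_{k=1}^K s_k a_X(f_k) a_Y(g_k)^T, the SDP value inf { Tr( T(u)/(2M) + T(v)/(2N) ) : [[T(u), X],[X^H, T(v)]] ⪰ 0, T(u), T(v) Hermitian Toeplitz } is at most Σ_k |s_k|; consequently it is at most ‖X‖_A. -/

import Mathlib

open Matrix ComplexOrder

noncomputable def aVec (M : ℕ) (f : ℝ) : Fin M → ℂ :=
  fun m => Complex.exp (-(2 * Real.pi * Complex.I * (m : ℕ) * f))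

noncomputable def atomSet (M N : ℕ) : Set (Matrix (Fin M) (Fin N) ℂ) :=
  {A | ∃ f ∈ Set.Icc (0 : ℝ) 1, ∃ g ∈ Set.Icc (0 : ℝ) 1,
    A = Matrix.of fun i j => aVec M f i * aVec N g j}

noncomputable def atomicNorm {M N : ℕ} (𝒜 : Set (Matrix (Fin M) (Fin N) ℂ))
    (X : Matrix (Fin M) (Fin N) ℂ) : ℝ :=
  sInf {c : ℝ | ∃ (K : ℕ) (s : Fin K → ℂ) (A : Fin K → Matrix (Fin M) (Fin N) ℂ),
    (∀ k, A k ∈ 𝒜) ∧ X = ∑ k, s k • A k ∧ c = ∑ k, ‖s k‖}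

/-- A matrix is Toeplitz if entries depend only on the difference of indices. -/
def IsToeplitz {n : ℕ} (T : Matrix (Fin n) (Fin n) ℂ) : Prop :=
  ∀ i j i' j' : Fin n, (i : ℤ) - (j : ℤ) = (i' : ℤ) - (j' : ℤ) → T i j = T i' j'

/-- The value of the matrix atomic norm SDP for `X`. -/
noncomputable def sdpValue (M N : ℕ) (X : Matrix (Fin M) (Fin N) ℂ) : ℝ :=
  sInf {c : ℝ | ∃ (Tu : Matrix (Fin M) (Fin M) ℂ) (Tv : Matrix (Fin N) (Fin N) ℂ),
    Tu.IsHermitian ∧ Tv.IsHermitian ∧ IsToeplitz Tu ∧ IsToeplitz Tv ∧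
    (Matrix.fromBlocks Tu X Xᴴ Tv).PosSemidef ∧
    c = (Matrix.trace Tu).re / (2 * M) + (Matrix.trace Tv).re / (2 * N)}

lemma aVec_mul_star {n : ℕ} (f : ℝ) (i j : Fin n) :
    aVec n f i * star (aVec n f j)
      = Complex.exp (-(2 * Real.pi * Complex.I * f) * (((i : ℤ) - (j : ℤ) : ℤ) : ℂ)) := by
  show aVec n f i * (starRingEnd ℂ) (aVec n f j) = _
  simp only [aVec]
  rw [← Complex.exp_conj, ← Complex.exp_add]
  congr 1
  have : (starRingEnd ℂ) (-(2 * (Real.pi : ℂ) * Complex.I * ((j : ℕ) : ℂ) * (f : ℝ)))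
      = 2 * (Real.pi : ℂ) * Complex.I * ((j : ℕ) : ℂ) * (f : ℝ) := by
    simp only [map_neg, _root_.map_mul, Complex.conj_I, Complex.conj_ofReal,
      Complex.conj_natCast, map_ofNat]
    ring
  rw [this]
  push_cast
  ring

lemma aVec_mul_star_self {n : ℕ} (f : ℝ) (i : Fin n) :
    aVec n f i * star (aVec n f i) = 1 := by
  rw [aVec_mul_star]; simp

/-- The SDP set is bounded below by 0. -/
lemma sdp_bddBelow (M N : ℕ) (X : Matrix (Fin M) (Fin N) ℂ) :
    BddBelow {c : ℝ | ∃ (Tu : Matrix (Fin M) (Fin M) ℂ) (Tv : Matrix (Fin N) (Fin N) ℂ),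
    Tu.IsHermitian ∧ Tv.IsHermitian ∧ IsToeplitz Tu ∧ IsToeplitz Tv ∧
    (Matrix.fromBlocks Tu X Xᴴ Tv).PosSemidef ∧
    c = (Matrix.trace Tu).re / (2 * M) + (Matrix.trace Tv).re / (2 * N)} := by
  refine ⟨0, ?_⟩
  rintro c ⟨Tu, Tv, _, _, _, _, hpsd, rfl⟩
  have hTu : Tu.PosSemidef := by
    have := hpsd.submatrix (Sum.inl : Fin M → Fin M ⊕ Fin N)
    have he : (fromBlocks Tu X Xᴴ Tv).submatrix (Sum.inl : Fin M → Fin M ⊕ Fin N) Sum.inl = Tu := by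
      ext i j; simp [fromBlocks]
    rwa [he] at this
  have hTv : Tv.PosSemidef := by
    have := hpsd.submatrix (Sum.inr : Fin N → Fin M ⊕ Fin N)
    have he : (fromBlocks Tu X Xᴴ Tv).submatrix (Sum.inr : Fin N → Fin M ⊕ Fin N) Sum.inr = Tv := by
      ext i j; simp [fromBlocks]
    rwa [he] at this
  have tr_nonneg : ∀ {n : ℕ} (T : Matrix (Fin n) (Fin n) ℂ), T.PosSemidef →
      0 ≤ (Matrix.trace T).re := by
    intro n T hT
    have hdiag : ∀ i, 0 ≤ (T i i).re := by
      intro i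
      exact (Complex.le_def.mp (hT.diag_nonneg (i := i))).1
    simpa [Matrix.trace, Matrix.diag, Complex.re_sum] using Finset.sum_nonneg fun i _ => hdiag i
  have h1 := tr_nonneg Tu hTu
  have h2 := tr_nonneg Tv hTv
  positivity

/-- Main helper: given an atomic decomposition, the SDP value is at most the sum of |s_k|. -/
lemma sdpValue_le_sum {M N : ℕ} (hM : 0 < M) (hN : 0 < N)
    (K : ℕ) (s : Fin K → ℂ) (f g : Fin K → ℝ)
    (X : Matrix (Fin M) (Fin N) ℂ)
    (hX : X = ∑ k, s k • (Matrix.of fun i j => aVec M (f k) i * aVec N (g k) j)) :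
    sdpValue M N X ≤ ∑ k, ‖s k‖ := by
  classical
  -- scalar coefficients
  set c : Fin K → ℂ := fun k => s k / (Real.sqrt (‖s k‖) : ℂ) with hc
  set r : Fin K → ℂ := fun k => (Real.sqrt (‖s k‖) : ℂ) with hr
  have hstar_r : ∀ k, star (r k) = r k := fun k => by simp [hr, Complex.conj_ofReal]
  have hrr : ∀ k, r k * r k = (‖s k‖ : ℂ) := fun k => by
    show (Real.sqrt (‖s k‖) : ℂ) * (Real.sqrt (‖s k‖) : ℂ)
      = (‖s k‖ : ℂ)
    norm_cast
    exact Real.mul_self_sqrt (norm_nonneg _)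
  have hcr : ∀ k, c k * r k = s k := by
    intro k
    by_cases hk : s k = 0
    · simp [hc, hr, hk]
    · have : (Real.sqrt (‖s k‖) : ℂ) ≠ 0 := by
        norm_cast
        exact Real.sqrt_ne_zero'.mpr (norm_pos_iff.mpr hk)
      exact div_mul_cancel₀ (s k) this
  have hcc : ∀ k, c k * star (c k) = (‖s k‖ : ℂ) := by
    intro k
    by_cases hk : s k = 0
    · simp [hc, hk]
    · have habs : ((‖s k‖ : ℝ) : ℂ) ≠ 0 := by
        norm_cast
        exact norm_ne_zero_iff.mpr hk
      show (s k / (Real.sqrt (‖s k‖) : ℂ))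
          * star (s k / (Real.sqrt (‖s k‖) : ℂ)) = _
      simp only [star_div₀, Complex.star_def, Complex.conj_ofReal]
      rw [div_mul_div_comm, Complex.mul_conj, hrr k, Complex.normSq_eq_norm_sq,
        div_eq_iff habs]
      push_cast
      ring
  -- the vectors and the block matrix
  set w : Fin K → (Fin M ⊕ Fin N) → ℂ := fun k =>
    Sum.elim (fun i => c k * aVec M (f k) i) (fun j => r k * star (aVec N (g k) j)) with hw
  set W : Matrix (Fin K) (Fin M ⊕ Fin N) ℂ := Matrix.of fun k p => star (w k p) with hW
  set Tu : Matrix (Fin M) (Fin M) ℂ :=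
    Matrix.of fun i j => ∑ k, (‖s k‖ : ℂ) * (aVec M (f k) i * star (aVec M (f k) j))
    with hTu
  set Tv : Matrix (Fin N) (Fin N) ℂ :=
    Matrix.of fun i j => ∑ k, (‖s k‖ : ℂ) * (star (aVec N (g k) i) * aVec N (g k) j)
    with hTv
  have hblock : Wᴴ * W = fromBlocks Tu X Xᴴ Tv := by
    ext p q
    rw [Matrix.mul_apply]
    have key : ∀ k, (Wᴴ p k) * (W k q) = w k p * star (w k q) := by
      intro k; simp [hW, Matrix.conjTranspose_apply]
    simp only [key]
    rcases p with i | i <;> rcases q with j | j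
    · -- Tu
      simp only [hw, Sum.elim_inl, fromBlocks_apply₁₁, hTu, Matrix.of_apply]
      refine Finset.sum_congr rfl fun k _ => ?_
      rw [star_mul']
      linear_combination (aVec M (f k) i * star (aVec M (f k) j)) * hcc k
    · -- X
      simp only [hw, Sum.elim_inl, Sum.elim_inr, fromBlocks_apply₁₂]
      rw [hX]
      simp only [Matrix.sum_apply, Matrix.smul_apply, Matrix.of_apply, smul_eq_mul]
      refine Finset.sum_congr rfl fun k _ => ?_
      rw [star_mul', star_star, hstar_r]
      linear_combination (aVec M (f k) i * aVec N (g k) j) * hcr k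
    · -- Xᴴ
      simp only [hw, Sum.elim_inl, Sum.elim_inr, fromBlocks_apply₂₁, Matrix.conjTranspose_apply]
      rw [hX]
      simp only [Matrix.sum_apply, Matrix.smul_apply, Matrix.of_apply, smul_eq_mul, star_sum]
      refine Finset.sum_congr rfl fun k _ => ?_
      simp only [star_mul', star_star]
      have hsc : star (c k) * r k = star (s k) := by
        rw [← hstar_r k, ← star_mul']
        exact congrArg star (hcr k)
      linear_combination (star (aVec M (f k) j) * star (aVec N (g k) i)) * hsc
    · -- Tv
      simp only [hw, Sum.elim_inr, fromBlocks_apply₂₂, hTv, Matrix.of_apply]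
      refine Finset.sum_congr rfl fun k _ => ?_
      rw [star_mul', star_star, hstar_r]
      linear_combination (star (aVec N (g k) i) * aVec N (g k) j) * hrr k
  have hpsd : (fromBlocks Tu X Xᴴ Tv).PosSemidef := by
    rw [← hblock]; exact posSemidef_conjTranspose_mul_self W
  -- Hermitian
  have hermTu : Tu.IsHermitian := by
    ext i j
    simp only [Matrix.conjTranspose_apply, hTu, Matrix.of_apply, star_sum]
    refine Finset.sum_congr rfl fun k _ => ?_
    simp only [star_mul', star_star, Complex.star_def, Complex.conj_ofReal, Complex.conj_conj]
    ring
  have hermTv : Tv.IsHermitian := by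
    ext i j
    simp only [Matrix.conjTranspose_apply, hTv, Matrix.of_apply, star_sum]
    refine Finset.sum_congr rfl fun k _ => ?_
    simp only [star_mul', star_star, Complex.star_def, Complex.conj_ofReal, Complex.conj_conj]
    ring
  -- Toeplitz
  have toepTu : IsToeplitz Tu := by
    intro i j i' j' h
    simp only [hTu, Matrix.of_apply]
    refine Finset.sum_congr rfl fun k _ => ?_
    rw [aVec_mul_star, aVec_mul_star, h]
  have toepTv : IsToeplitz Tv := by
    intro i j i' j' h
    simp only [hTv, Matrix.of_apply]
    refine Finset.sum_congr rfl fun k _ => ?_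
    have e1 : star (aVec N (g k) i) * aVec N (g k) j = aVec N (g k) j * star (aVec N (g k) i) :=
      mul_comm _ _
    have e2 : star (aVec N (g k) i') * aVec N (g k) j' = aVec N (g k) j' * star (aVec N (g k) i') :=
      mul_comm _ _
    rw [e1, e2, aVec_mul_star, aVec_mul_star]
    have h2 : (j : ℤ) - (i : ℤ) = (j' : ℤ) - (i' : ℤ) := by omega
    rw [h2]
  -- traces
  have trTu : (Matrix.trace Tu).re = (M : ℝ) * ∑ k, ‖s k‖ := by
    have : Matrix.trace Tu = (M : ℂ) * ∑ k, (‖s k‖ : ℂ) := by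
      simp only [Matrix.trace, Matrix.diag, hTu, Matrix.of_apply]
      rw [Finset.sum_congr rfl fun i _ => Finset.sum_congr rfl fun k _ => by
        rw [aVec_mul_star_self, mul_one]]
      rw [Finset.sum_const, Finset.card_univ, Fintype.card_fin, nsmul_eq_mul]
    rw [this]
    simp [Complex.re_sum]
  have trTv : (Matrix.trace Tv).re = (N : ℝ) * ∑ k, ‖s k‖ := by
    have : Matrix.trace Tv = (N : ℂ) * ∑ k, (‖s k‖ : ℂ) := by
      simp only [Matrix.trace, Matrix.diag, hTv, Matrix.of_apply]
      rw [Finset.sum_congr rfl fun i _ => Finset.sum_congr rfl fun k _ => by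
        rw [mul_comm (star (aVec N (g k) i)), aVec_mul_star_self, mul_one]]
      rw [Finset.sum_const, Finset.card_univ, Fintype.card_fin, nsmul_eq_mul]
    rw [this]
    simp [Complex.re_sum]
  -- conclude
  have hmem : (∑ k, ‖s k‖) ∈ {c : ℝ |
      ∃ (Tu : Matrix (Fin M) (Fin M) ℂ) (Tv : Matrix (Fin N) (Fin N) ℂ),
      Tu.IsHermitian ∧ Tv.IsHermitian ∧ IsToeplitz Tu ∧ IsToeplitz Tv ∧
      (Matrix.fromBlocks Tu X Xᴴ Tv).PosSemidef ∧
      c = (Matrix.trace Tu).re / (2 * M) + (Matrix.trace Tv).re / (2 * N)} := by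
    refine ⟨Tu, Tv, hermTu, hermTv, toepTu, toepTv, hpsd, ?_⟩
    rw [trTu, trTv]
    have hM' : (M : ℝ) ≠ 0 := Nat.cast_ne_zero.mpr hM.ne'
    have hN' : (N : ℝ) ≠ 0 := Nat.cast_ne_zero.mpr hN.ne'
    field_simp
    ring
  exact csInf_le (sdp_bddBelow M N X) hmem

/-- Easy direction of Theorem 1: the SDP value is at most `∑ |s_k|` for any atomic
decomposition, and consequently at most the atomic norm. -/
theorem sdpValue_le {M N : ℕ} (hM : 0 < M) (hN : 0 < N)
    (K : ℕ) (s : Fin K → ℂ) (f g : Fin K → ℝ)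
    (hf : ∀ k, f k ∈ Set.Icc (0 : ℝ) 1) (hg : ∀ k, g k ∈ Set.Icc (0 : ℝ) 1)
    (X : Matrix (Fin M) (Fin N) ℂ)
    (hX : X = ∑ k, s k • (Matrix.of fun i j => aVec M (f k) i * aVec N (g k) j)) :
    sdpValue M N X ≤ ∑ k, ‖s k‖ ∧
      sdpValue M N X ≤ atomicNorm (atomSet M N) X := by
  constructor
  · exact sdpValue_le_sum hM hN K s f g X hX
  · apply le_csInf
    · exact ⟨∑ k, ‖s k‖, K, s,
        (fun k => Matrix.of fun i j => aVec M (f k) i * aVec N (g k) j),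
        fun k => ⟨f k, hf k, g k, hg k, rfl⟩, hX, rfl⟩
    · rintro c ⟨K', s', A, hA, hX', rfl⟩
      choose f' hf' g' hg' hA' using hA
      have : X = ∑ k, s' k • (Matrix.of fun i j => aVec M (f' k) i * aVec N (g' k) j) := by
        rw [hX']
        exact Finset.sum_congr rfl fun k _ => by rw [hA' k]
      exact sdpValue_le_sum hM hN K' s' f' g' X this
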